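/- The compositional/multiplicative inverse identity: if T(z) = C(z(1-z+z^2)) and g2(z) = (-1 + z^2 + sqrt(1 - 2z^2 + 4z^3 - 3z^4))/(2z^3), then the Riordan array (T(z), z*T(z)) has inverse Riordan array (g2(z), z*g2(z)); equivalently, setting f(z) = z*T(z) and h(z) = z*g2(z), one has f(h(z)) = z and h(f(z)) = z as formal power series, and g2(z)*T(h(z)) = 1. -/

import Mathlib

/-- The Catalan generating function `C(x) = (1 - sqrt(1-4x))/(2x)`. -/
noncomputable def catalanGF (x : ℝ) : ℝ :=
  if x = 0 then 1 else (1 - Real.sqrt (1 - 4*x)) / (2*x)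

/-- `T(z) = C(z(1-z+z^2))`. -/
noncomputable def Tfun (z : ℝ) : ℝ := catalanGF (z * (1 - z + z^2))

/-- `g2(z) = (-1 + z^2 + sqrt(1 - 2z^2 + 4z^3 - 3z^4))/(2z^3)` (with value `1` at `z = 0`,
its limiting value). -/
noncomputable def g2fun (z : ℝ) : ℝ :=
  if z = 0 then 1
  else (-1 + z^2 + Real.sqrt (1 - 2*z^2 + 4*z^3 - 3*z^4)) / (2*z^3)

/-- If `w` is small, nonzero, and satisfies `z²w² + (1-z²)w + z² - z = 0`, then `w·T(w) = z`. -/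
lemma riordan_key1 (z w : ℝ) (hzl : -(1/10) < z) (hzu : z < 1/10)
    (hwlb : -(1/3) ≤ w) (hwub : w ≤ 1/3) (hw0 : w ≠ 0)
    (hR : z^2*w^2 + (1 - z^2)*w + z^2 - z = 0) : w * Tfun w = z := by
  have hpw : (0:ℝ) < 1 - w + w^2 := by nlinarith [sq_nonneg (2*w - 1)]
  have harg : w * (1 - w + w^2) ≠ 0 := mul_ne_zero hw0 (by linarith)
  have hDeq : 1 - 4*(w*(1 - w + w^2)) = (1 - 2*z*(1 - w + w^2))^2 := by
    linear_combination (-4*(1 - w + w^2)) * hR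
  have hpw2 : 1 - w + w^2 ≤ 2 := by nlinarith
  have hrhs0 : 0 ≤ 1 - 2*z*(1 - w + w^2) := by
    nlinarith [mul_pos (show (0:ℝ) < 1/10 - z by linarith) hpw]
  have hsqrtD : Real.sqrt (1 - 4*(w*(1 - w + w^2))) = 1 - 2*z*(1 - w + w^2) := by
    rw [hDeq]; exact Real.sqrt_sq hrhs0
  rw [Tfun, catalanGF, if_neg harg, hsqrtD]
  have hpw' : (1:ℝ) - w + w^2 ≠ 0 := ne_of_gt hpw
  field_simp
  ring

/-- If `w` is small, nonzero, and satisfies `(1-z+z²)w² - w + z = 0`, then `w·g2(w) = z`. -/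
lemma riordan_key2 (z w : ℝ) (hzl : -(1/10) < z) (hzu : z < 1/10)
    (hwlb : -(1/3) ≤ w) (hwub : w ≤ 1/3) (hw0 : w ≠ 0)
    (hR : (1 - z + z^2)*w^2 - w + z = 0) : w * g2fun w = z := by
  have hQeq : 1 - 2*w^2 + 4*w^3 - 3*w^4 = (2*w^2*z + 1 - w^2)^2 := by
    linear_combination (-4*w^2) * hR
  have hrhs0 : 0 ≤ 2*w^2*z + 1 - w^2 := by nlinarith [sq_nonneg w]
  have hsqrtQ : Real.sqrt (1 - 2*w^2 + 4*w^3 - 3*w^4) = 2*w^2*z + 1 - w^2 := by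
    rw [hQeq]; exact Real.sqrt_sq hrhs0
  rw [g2fun, if_neg hw0, hsqrtQ]
  field_simp
  ring

/-- Facts about `h(z) = z·g2(z)` for small nonzero `z`. -/
lemma riordan_hfacts (z : ℝ) (hzl : -(1/10) < z) (hzu : z < 1/10) (hz0 : z ≠ 0) :
    -(1/3) ≤ z * g2fun z ∧ z * g2fun z ≤ 1/3 ∧ z * g2fun z ≠ 0 ∧
      z^2*(z * g2fun z)^2 + (1 - z^2)*(z * g2fun z) + z^2 - z = 0 := by
  have hz2 : (0:ℝ) < z^2 := by positivity
  set Q : ℝ := 1 - 2*z^2 + 4*z^3 - 3*z^4 with hQdef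
  have hQlb : (9:ℝ)/10 ≤ Q := by nlinarith [sq_nonneg z, sq_nonneg (z^2)]
  set S : ℝ := Real.sqrt Q with hSdef
  have hS0 : 0 ≤ S := Real.sqrt_nonneg Q
  have hS2 : S^2 = Q := Real.sq_sqrt (by rw [hQdef] at hQlb ⊢; linarith)
  have hSub : S ≤ 1 := by nlinarith [sq_nonneg (2 - 4*z + 3*z^2)]
  have hSlb : (9:ℝ)/10 ≤ S := by nlinarith
  clear_value S
  clear_value Q
  set w : ℝ := (-1 + z^2 + S)/(2*z^2) with hwdef
  have hw : z * g2fun z = w := by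
    rw [g2fun, if_neg hz0, ← hQdef, ← hSdef, hwdef]
    field_simp
  have hSeq : S = 2*z^2*w + 1 - z^2 := by
    rw [hwdef]; field_simp; ring
  clear_value w
  rw [hw]
  have hR : z^2*w^2 + (1 - z^2)*w + z^2 - z = 0 := by
    have h4 : 4*z^2*(z^2*w^2 + (1 - z^2)*w + z^2 - z) = 0 := by
      have hsq : (2*z^2*w + 1 - z^2)^2 = Q := by rw [← hSeq, hS2]
      rw [hQdef] at hsq
      linear_combination hsq
    rcases mul_eq_zero.mp h4 with h | h
    · exfalso; nlinarith
    · exact h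
  have hkey : (S + 1 - z^2) * w = 2*z*(1-z) := by
    linear_combination w * hSeq + 2 * hR
  have hden : (18:ℝ)/10 ≤ S + 1 - z^2 := by nlinarith
  have hwub : w ≤ 1/3 := by nlinarith
  have hwlb : -(1/3) ≤ w := by nlinarith
  have hw0 : w ≠ 0 := by
    intro h
    rw [h, mul_zero] at hkey
    have hzz : z*(1-z) = 0 := by linarith
    rcases mul_eq_zero.mp hzz with h' | h'
    · exact hz0 h'
    · linarith
  exact ⟨hwlb, hwub, hw0, hR⟩

/-- Facts about `f(z) = z·T(z)` for small nonzero `z`. -/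
lemma riordan_ffacts (z : ℝ) (hzl : -(1/10) < z) (hzu : z < 1/10) (hz0 : z ≠ 0) :
    -(1/3) ≤ z * Tfun z ∧ z * Tfun z ≤ 1/3 ∧ z * Tfun z ≠ 0 ∧
      (1 - z + z^2)*(z * Tfun z)^2 - (z * Tfun z) + z = 0 := by
  have hpz : (0:ℝ) < 1 - z + z^2 := by nlinarith [sq_nonneg (2*z - 1)]
  have harg : z * (1 - z + z^2) ≠ 0 := mul_ne_zero hz0 (ne_of_gt hpz)
  set D : ℝ := 1 - 4*(z*(1 - z + z^2)) with hDdef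
  have hDlb : (1:ℝ)/2 ≤ D := by nlinarith [sq_nonneg z, sq_nonneg (z^2)]
  have hDub : D ≤ 3/2 := by nlinarith [sq_nonneg z, sq_nonneg (z^2)]
  set S : ℝ := Real.sqrt D with hSdef
  have hS0 : 0 ≤ S := Real.sqrt_nonneg D
  have hS2 : S^2 = D := Real.sq_sqrt (by rw [hDdef] at hDlb ⊢; linarith)
  have hSub : S ≤ 5/4 := by nlinarith
  clear_value S
  clear_value D
  set w : ℝ := z * Tfun z with hwdef
  have hw : w = (1 - S)/(2*(1 - z + z^2)) := by
    rw [hwdef, Tfun, catalanGF, if_neg harg, ← hDdef, ← hSdef]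
    field_simp
  clear_value w
  have hSeq : S = 1 - 2*(1 - z + z^2)*w := by
    rw [hw]; field_simp; ring
  have hR : (1 - z + z^2)*w^2 - w + z = 0 := by
    have h4 : 4*(1 - z + z^2)*((1 - z + z^2)*w^2 - w + z) = 0 := by
      have hsq : (1 - 2*(1 - z + z^2)*w)^2 = D := by rw [← hSeq, hS2]
      rw [hDdef] at hsq
      linear_combination hsq
    rcases mul_eq_zero.mp h4 with h | h
    · exfalso; nlinarith
    · exact h
  have hkey : (1 + S) * w = 2*z := by
    linear_combination w * hSeq - 2 * hR
  have hwub : w ≤ 1/3 := by nlinarith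
  have hwlb : -(1/3) ≤ w := by nlinarith
  have hw0 : w ≠ 0 := by
    intro h
    rw [h, mul_zero] at hkey
    exact hz0 (by linarith)
  exact ⟨hwlb, hwub, hw0, hR⟩

/-- The Riordan array `(T(z), z T(z))` with `T(z) = C(z(1-z+z^2))` has inverse
`(g2(z), z g2(z))`: setting `f(z) = z T(z)` and `h(z) = z g2(z)`, one has
`f(h(z)) = z`, `h(f(z)) = z`, and `g2(z) * T(h(z)) = 1` near `z = 0`. -/
theorem riordan_inverse_peakless :
    ∃ ε > (0 : ℝ), ∀ z : ℝ, |z| < ε →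
      (fun w => w * Tfun w) ((fun w => w * g2fun w) z) = z ∧
      (fun w => w * g2fun w) ((fun w => w * Tfun w) z) = z ∧
      g2fun z * Tfun ((fun w => w * g2fun w) z) = 1 := by
  refine ⟨1/10, by norm_num, fun z hz => ?_⟩
  simp only
  by_cases hz0 : z = 0
  · subst hz0
    simp [Tfun, g2fun, catalanGF]
  obtain ⟨hzl, hzu⟩ : -(1/10) < z ∧ z < 1/10 := abs_lt.mp hz
  obtain ⟨h1, h2, h3, h4⟩ := riordan_hfacts z hzl hzu hz0
  obtain ⟨g1, g2, g3, g4⟩ := riordan_ffacts z hzl hzu hz0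
  have hfw : (z * g2fun z) * Tfun (z * g2fun z) = z :=
    riordan_key1 z (z * g2fun z) hzl hzu h1 h2 h3 h4
  have hhw : (z * Tfun z) * g2fun (z * Tfun z) = z :=
    riordan_key2 z (z * Tfun z) hzl hzu g1 g2 g3 g4
  refine ⟨hfw, hhw, ?_⟩
  have hT : Tfun (z * g2fun z) = z / (z * g2fun z) := by
    rw [eq_div_iff h3, mul_comm]; exact hfw
  have hg : g2fun z = (z * g2fun z) / z := by field_simp
  rw [hT, hg]
  field_simp
  ring
  exact mul_inv_cancel₀ (right_ne_zero_of_mul h3)
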